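/- arXiv:2509.17235 — 3 statements merged into one kernel-verified Lean document; each statement's English description precedes it below -/
import Mathlib

section
/- Let (Ω, P) be a probability space, k ≥ 2 an integer, and d > 0 a real number. Let B ⊆ Ω be a measurable set with P(B) > 0 and let d_t : Ω → ℝ be a measurable function with d_t(ω) > d for all ω ∈ B. Define L_1 = k·log(k) and L_2 = ∫_B [ log(k) + (k−1)·log(k − 1 + e^{−d_t(ω)²}) ] dP(ω) + (1 − P(B))·k·log(k). Then L_1 − L_2 > P(B)·(k−1)·log( k / (k − 1 + e^{−d²}) ) > 0. In particular the uniform graph case, in which every dynamic graph equals the static graph on every sample, is not an optimal (loss-minimizing) solution of the expected graph cohesion loss. -/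
/-- Comparison of the expected graph cohesion loss of the uniform graph case
(`L_1 = k·log k`) with the loss `L_2` of a model that has one dynamic graph at distance
`d_t(ω) > d` from the static graph on an event `B` of positive probability and is uniform
off `B`: `L_1 − L_2 > P(B)·(k−1)·log(k/(k−1+e^{−d²})) > 0`. Hence the uniform graph case is
not optimal. -/
theorem uniform_case_not_optimal_expected_loss
    {Ω : Type*} [MeasurableSpace Ω] (P : MeasureTheory.Measure Ω)
    [MeasureTheory.IsProbabilityMeasure P]
    (k : ℕ) (hk : 2 ≤ k) (d : ℝ) (hd : 0 < d)
    (B : Set Ω) (hB : MeasurableSet B) (hPB : 0 < P B)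
    (dt : Ω → ℝ) (hdt : Measurable dt) (hdtB : ∀ ω ∈ B, d < dt ω) :
    ((k : ℝ) * Real.log (k : ℝ)) -
        ((∫ ω in B, (Real.log (k : ℝ) +
            ((k : ℝ) - 1) * Real.log ((k : ℝ) - 1 + Real.exp (-(dt ω) ^ 2))) ∂P) +
          (1 - (P B).toReal) * ((k : ℝ) * Real.log (k : ℝ)))
      > (P B).toReal *
          (((k : ℝ) - 1) * Real.log ((k : ℝ) / ((k : ℝ) - 1 + Real.exp (-d ^ 2)))) ∧
    0 < (P B).toReal *
          (((k : ℝ) - 1) * Real.log ((k : ℝ) / ((k : ℝ) - 1 + Real.exp (-d ^ 2)))) := by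
  have hk2 : (2 : ℝ) ≤ (k : ℝ) := by exact_mod_cast hk
  have hk1 : (1 : ℝ) ≤ (k : ℝ) - 1 := by linarith
  have hk0 : (0 : ℝ) < (k : ℝ) := by linarith
  set c : ℝ := Real.log (k : ℝ) + ((k : ℝ) - 1) * Real.log ((k : ℝ) - 1 + Real.exp (-d ^ 2))
    with hc
  set f : Ω → ℝ := fun ω =>
    Real.log (k : ℝ) + ((k : ℝ) - 1) * Real.log ((k : ℝ) - 1 + Real.exp (-(dt ω) ^ 2))
    with hf
  have hden_pos : ∀ x : ℝ, (0 : ℝ) < (k : ℝ) - 1 + Real.exp (-x ^ 2) := fun x => by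
    have := Real.exp_pos (-x ^ 2); linarith
  have hden_lt : (k : ℝ) - 1 + Real.exp (-d ^ 2) < (k : ℝ) := by
    have : Real.exp (-d ^ 2) < 1 := by
      rw [Real.exp_lt_one_iff]; nlinarith
    linarith
  -- f is measurable and bounded
  have hfm : Measurable f := by
    apply Measurable.add measurable_const
    exact (((hdt.pow_const 2).neg.exp.const_add _).log.const_mul _)
  have hfbound : ∀ ω, ‖f ω‖ ≤ Real.log (k : ℝ) + ((k : ℝ) - 1) * Real.log (k : ℝ) := by
    intro ω
    simp only [hf]
    have h1 : Real.exp (-(dt ω) ^ 2) ≤ 1 := by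
      rw [Real.exp_le_one_iff]; nlinarith [sq_nonneg (dt ω)]
    have h2 : (0 : ℝ) ≤ Real.log ((k : ℝ) - 1 + Real.exp (-(dt ω) ^ 2)) := by
      apply Real.log_nonneg; nlinarith [Real.exp_pos (-(dt ω) ^ 2)]
    have h3 : Real.log ((k : ℝ) - 1 + Real.exp (-(dt ω) ^ 2)) ≤ Real.log (k : ℝ) := by
      apply Real.log_le_log (hden_pos _); linarith
    have h4 : (0 : ℝ) ≤ Real.log (k : ℝ) := Real.log_nonneg (by linarith)
    rw [Real.norm_eq_abs, abs_of_nonneg (by positivity)]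
    have : ((k : ℝ) - 1) * Real.log ((k : ℝ) - 1 + Real.exp (-(dt ω) ^ 2))
        ≤ ((k : ℝ) - 1) * Real.log (k : ℝ) := by
      apply mul_le_mul_of_nonneg_left h3 (by linarith)
    linarith
  have hfint : MeasureTheory.IntegrableOn f B P := by
    apply MeasureTheory.Integrable.mono' (MeasureTheory.integrable_const _)
      hfm.aestronglyMeasurable
    exact Filter.Eventually.of_forall hfbound
  -- strict pointwise inequality on B
  have hflt : ∀ ω ∈ B, f ω < c := by
    intro ω hω
    have hd2 : d ^ 2 < (dt ω) ^ 2 := by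
      have := hdtB ω hω
      nlinarith
    have : Real.exp (-(dt ω) ^ 2) < Real.exp (-d ^ 2) := Real.exp_lt_exp.2 (by linarith)
    have hlog : Real.log ((k : ℝ) - 1 + Real.exp (-(dt ω) ^ 2))
        < Real.log ((k : ℝ) - 1 + Real.exp (-d ^ 2)) := by
      apply Real.log_lt_log (hden_pos _); linarith
    have := mul_lt_mul_of_pos_left hlog (show (0:ℝ) < (k : ℝ) - 1 by linarith)
    simp only [hf, hc]; linarith
  -- strict integral inequality
  have hgint : MeasureTheory.IntegrableOn (fun ω => c - f ω) B P :=
    (MeasureTheory.integrable_const c).sub hfint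
  have hpos : 0 < ∫ ω in B, (c - f ω) ∂P := by
    rw [MeasureTheory.setIntegral_pos_iff_support_of_nonneg_ae _ hgint]
    · refine lt_of_lt_of_le hPB (MeasureTheory.measure_mono ?_)
      intro ω hω
      exact ⟨sub_ne_zero.2 (ne_of_gt (hflt ω hω)), hω⟩
    · rw [Filter.EventuallyLE, MeasureTheory.ae_restrict_iff' hB]
      exact Filter.Eventually.of_forall fun ω hω => sub_nonneg.2 (hflt ω hω).le
  have hint_lt : ∫ ω in B, f ω ∂P < (P B).toReal * c := by
    have := MeasureTheory.integral_sub (MeasureTheory.integrable_const c) hfint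
    rw [this] at hpos
    rw [MeasureTheory.setIntegral_const] at hpos
    rw [smul_eq_mul] at hpos
    rw [MeasureTheory.measureReal_def] at hpos
    linarith
  have hPBr : 0 < (P B).toReal :=
    ENNReal.toReal_pos hPB.ne' (MeasureTheory.measure_ne_top P B)
  have hlogdiv : Real.log ((k : ℝ) / ((k : ℝ) - 1 + Real.exp (-d ^ 2)))
      = Real.log (k : ℝ) - Real.log ((k : ℝ) - 1 + Real.exp (-d ^ 2)) :=
    Real.log_div (by positivity) (ne_of_gt (hden_pos d))
  have hlogdiv_pos : 0 < Real.log ((k : ℝ) / ((k : ℝ) - 1 + Real.exp (-d ^ 2))) := by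
    apply Real.log_pos
    rw [lt_div_iff₀ (hden_pos d)]; linarith
  constructor
  · have key : (P B).toReal * ((k : ℝ) * Real.log (k : ℝ)) - (P B).toReal * c
        = (P B).toReal *
          (((k : ℝ) - 1) * Real.log ((k : ℝ) / ((k : ℝ) - 1 + Real.exp (-d ^ 2)))) := by
      rw [hlogdiv, hc]; ring
    have : ∫ ω in B, f ω ∂P
        = ∫ ω in B, (Real.log (k : ℝ) +
            ((k : ℝ) - 1) * Real.log ((k : ℝ) - 1 + Real.exp (-(dt ω) ^ 2))) ∂P := rfl
    rw [← this]
    nlinarith [hint_lt]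
  · positivity
end

section
/- Let N be a positive integer, k ≥ 2 an integer, and A_s any real N×N matrix. Then there exist real N×N matrices A_1, …, A_k such that the per-sample graph cohesion loss satisfies ℓ(A_s; A_1,…,A_k) < k·log(k); that is, the uniform configuration A_1 = … = A_k = A_s (whose loss is k·log k) is not a minimizer of the per-sample graph cohesion loss. -/
/-- Squared Frobenius norm of a real N×N matrix: `∑ i j, (A i j)^2`. -/
noncomputable def frobSq {N : ℕ} (A : Matrix (Fin N) (Fin N) ℝ) : ℝ :=
  ∑ i, ∑ j, (A i j) ^ 2

/-- Frobenius norm of a real N×N matrix. -/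
noncomputable def frobNorm {N : ℕ} (A : Matrix (Fin N) (Fin N) ℝ) : ℝ :=
  Real.sqrt (frobSq A)

/-- Similarity measure `h(X, Y) = exp(−‖X − Y‖_F²)` (temperature τ = 1). -/
noncomputable def hSim {N : ℕ} (X Y : Matrix (Fin N) (Fin N) ℝ) : ℝ :=
  Real.exp (-(frobNorm (X - Y)) ^ 2)

/-- Per-sample graph cohesion loss
`ℓ(A_s; A_1,…,A_k) = ∑_i −log( h(A_s,A_i) / (h(A_s,A_i) + ∑_{j≠i} h(A_i,A_j)) )`. -/
noncomputable def gcLoss {N k : ℕ} (As : Matrix (Fin N) (Fin N) ℝ)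
    (A : Fin k → Matrix (Fin N) (Fin N) ℝ) : ℝ :=
  ∑ i, -Real.log (hSim As (A i) /
    (hSim As (A i) + ∑ j ∈ Finset.univ.erase i, hSim (A i) (A j)))

lemma frobSq_nonneg {N : ℕ} (A : Matrix (Fin N) (Fin N) ℝ) : 0 ≤ frobSq A := by
  unfold frobSq; positivity

lemma hSim_eq {N : ℕ} (X Y : Matrix (Fin N) (Fin N) ℝ) :
    hSim X Y = Real.exp (-(frobSq (X - Y))) := by
  unfold hSim frobNorm
  rw [Real.sq_sqrt (frobSq_nonneg _)]

lemma hSim_self {N : ℕ} (X : Matrix (Fin N) (Fin N) ℝ) : hSim X X = 1 := by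
  rw [hSim_eq, sub_self]; simp [frobSq]

lemma frobSq_std {N : ℕ} (i0 : Fin N) :
    frobSq (Matrix.single i0 i0 (1:ℝ)) = 1 := by
  simp [frobSq, Matrix.single, ite_pow, Finset.sum_ite_eq, ite_and]

lemma hSim_add_std {N : ℕ} (i0 : Fin N) (As : Matrix (Fin N) (Fin N) ℝ) :
    hSim As (As + Matrix.single i0 i0 (1:ℝ)) = Real.exp (-1) := by
  rw [hSim_eq]
  have h1 : As - (As + Matrix.single i0 i0 (1:ℝ))
      = -(Matrix.single i0 i0 (1:ℝ)) := by abel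
  have h2 : frobSq (-(Matrix.single i0 i0 (1:ℝ)))
      = frobSq (Matrix.single i0 i0 (1:ℝ)) := by simp [frobSq]
  rw [h1, h2, frobSq_std]

lemma hSim_add_std' {N : ℕ} (i0 : Fin N) (As : Matrix (Fin N) (Fin N) ℝ) :
    hSim (As + Matrix.single i0 i0 (1:ℝ)) As = Real.exp (-1) := by
  rw [hSim_eq]
  have h1 : (As + Matrix.single i0 i0 (1:ℝ)) - As
      = Matrix.single i0 i0 (1:ℝ) := by abel
  rw [h1, frobSq_std]

/-- For any static graph `A_s` there exist dynamic graphs `A_1,…,A_k` whose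
per-sample graph cohesion loss is strictly below `k·log k`; hence the uniform configuration
`A_1 = … = A_k = A_s` (whose loss is `k·log k`) is not a minimizer. -/
theorem uniform_configuration_not_minimizer
    {N k : ℕ} (hN : 0 < N) (hk : 2 ≤ k)
    (As : Matrix (Fin N) (Fin N) ℝ) :
    ∃ A : Fin k → Matrix (Fin N) (Fin N) ℝ,
      gcLoss As A < (k : ℝ) * Real.log (k : ℝ) := by
  haveI : NeZero k := ⟨by omega⟩
  set i0 : Fin N := ⟨0, hN⟩
  set E : Matrix (Fin N) (Fin N) ℝ := Matrix.single i0 i0 1 with hE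
  set e : ℝ := Real.exp (-1) with he
  have he0 : 0 < e := Real.exp_pos _
  have he1 : e < 1 := by
    rw [he]; exact Real.exp_lt_one_iff.mpr (by norm_num)
  have hk0 : (0:ℝ) < (k:ℝ) := by positivity
  refine ⟨fun i => if i = 0 then As + E else As, ?_⟩
  set A : Fin k → Matrix (Fin N) (Fin N) ℝ := fun i => if i = 0 then As + E else As with hA
  have hA0 : A 0 = As + E := if_pos rfl
  have hAne : ∀ i : Fin k, i ≠ 0 → A i = As := fun i hi => if_neg hi
  -- the loss term function
  set f : Fin k → ℝ := fun i => -Real.log (hSim As (A i) /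
    (hSim As (A i) + ∑ j ∈ Finset.univ.erase i, hSim (A i) (A j))) with hf
  have hgc : gcLoss As A = ∑ i, f i := rfl
  -- term at 0
  have hf0 : f 0 = Real.log (k:ℝ) := by
    have hsum : ∑ j ∈ Finset.univ.erase (0 : Fin k), hSim (A 0) (A j)
        = ((k:ℝ) - 1) * e := by
      have : ∀ j ∈ Finset.univ.erase (0 : Fin k), hSim (A 0) (A j) = e := by
        intro j hj
        rw [hA0, hAne j (Finset.ne_of_mem_erase hj), hE]
        exact hSim_add_std' i0 As
      rw [Finset.sum_congr rfl this, Finset.sum_const, Finset.card_erase_of_mem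
        (Finset.mem_univ _), Finset.card_univ, Fintype.card_fin]
      rw [nsmul_eq_mul, Nat.cast_sub (by omega)]
      norm_num
    have hA0' : hSim As (A 0) = e := by rw [hA0, hE]; exact hSim_add_std i0 As
    rw [hf]
    simp only [hA0', hsum]
    have : e + ((k:ℝ) - 1) * e = (k:ℝ) * e := by ring
    rw [this]
    have : e / ((k:ℝ) * e) = ((k:ℝ))⁻¹ := by field_simp
    rw [this, Real.log_inv, neg_neg]
  -- terms at i ≠ 0
  have hfi : ∀ i : Fin k, i ≠ 0 → f i = Real.log ((k:ℝ) - 1 + e) := by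
    intro i hi
    have hAi : A i = As := hAne i hi
    have h0mem : (0 : Fin k) ∈ Finset.univ.erase i := by
      simp [Finset.mem_erase, Ne.symm hi]
    have hsum : ∑ j ∈ Finset.univ.erase i, hSim (A i) (A j)
        = e + ((k:ℝ) - 2) := by
      rw [← Finset.add_sum_erase _ _ h0mem]
      have h1 : hSim (A i) (A 0) = e := by
        rw [hAi, hA0, hE]; exact hSim_add_std i0 As
      have h2 : ∑ j ∈ (Finset.univ.erase i).erase (0 : Fin k), hSim (A i) (A j)
          = (k:ℝ) - 2 := by
        have hc : ∀ j ∈ (Finset.univ.erase i).erase (0 : Fin k),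
            hSim (A i) (A j) = 1 := by
          intro j hj
          rw [hAi, hAne j (Finset.ne_of_mem_erase hj)]
          exact hSim_self As
        rw [Finset.sum_congr rfl hc, Finset.sum_const,
          Finset.card_erase_of_mem h0mem, Finset.card_erase_of_mem (Finset.mem_univ _),
          Finset.card_univ, Fintype.card_fin]
        rw [nsmul_eq_mul, mul_one, Nat.cast_sub (by omega), Nat.cast_sub (by omega)]
        push_cast
        ring
      rw [h1, h2]
    have hAs1 : hSim As (A i) = 1 := by rw [hAi]; exact hSim_self As
    rw [hf]
    simp only [hAs1, hsum]
    have hD : (0:ℝ) < (k:ℝ) - 1 + e := by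
      have : (2:ℝ) ≤ (k:ℝ) := by exact_mod_cast hk
      linarith
    have : (1:ℝ) + (e + ((k:ℝ) - 2)) = (k:ℝ) - 1 + e := by ring
    rw [this, one_div, Real.log_inv, neg_neg]
  -- assemble
  have hsplit : ∑ i, f i = f 0 + ∑ i ∈ Finset.univ.erase (0 : Fin k), f i :=
    (Finset.add_sum_erase _ _ (Finset.mem_univ _)).symm
  have hrest : ∑ i ∈ Finset.univ.erase (0 : Fin k), f i
      = ((k:ℝ) - 1) * Real.log ((k:ℝ) - 1 + e) := by
    rw [Finset.sum_congr rfl (fun i hi => hfi i (Finset.ne_of_mem_erase hi)),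
      Finset.sum_const, Finset.card_erase_of_mem (Finset.mem_univ _),
      Finset.card_univ, Fintype.card_fin, nsmul_eq_mul, Nat.cast_sub (by omega)]
    norm_num
  have hk2 : (2:ℝ) ≤ (k:ℝ) := by exact_mod_cast hk
  have hD0 : (0:ℝ) < (k:ℝ) - 1 + e := by linarith
  have hDk : (k:ℝ) - 1 + e < (k:ℝ) := by linarith
  have hlog : Real.log ((k:ℝ) - 1 + e) < Real.log (k:ℝ) := Real.log_lt_log hD0 hDk
  rw [hgc, hsplit, hf0, hrest]
  nlinarith [hlog, hk2]
end

section
/- Let N be a positive integer, k ≥ 2 an integer, and A_s, A_* real N×N matrices. If A_1 = A_2 = … = A_k = A_* (the homogeneous dynamic graph case), then there exist real N×N matrices B_1, …, B_k, not all equal, such that ℓ(A_s; B_1,…,B_k) < ℓ(A_s; A_1,…,A_k); that is, no homogeneous dynamic graph configuration minimizes the per-sample graph cohesion loss. -/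
lemma hSim_pos {N : ℕ} (X Y : Matrix (Fin N) (Fin N) ℝ) : 0 < hSim X Y :=
  Real.exp_pos _

lemma hSim_comm {N : ℕ} (X Y : Matrix (Fin N) (Fin N) ℝ) : hSim X Y = hSim Y X := by
  rw [hSim_eq, hSim_eq]
  congr 1
  unfold frobSq
  refine congrArg Neg.neg ?_
  refine Finset.sum_congr rfl fun i _ => Finset.sum_congr rfl fun j _ => ?_
  rw [Matrix.sub_apply, Matrix.sub_apply]
  ring

lemma frobSq_pos {N : ℕ} {X : Matrix (Fin N) (Fin N) ℝ} (h : X ≠ 0) : 0 < frobSq X := by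
  rcases (frobSq_nonneg X).lt_or_eq with h1 | h1
  · exact h1
  · exfalso
    apply h
    ext i j
    have hin : ∀ i ∈ (Finset.univ : Finset (Fin N)), (0:ℝ) ≤ ∑ j, (X i j) ^ 2 :=
      fun _ _ => Finset.sum_nonneg fun _ _ => sq_nonneg _
    have h2 := (Finset.sum_eq_zero_iff_of_nonneg hin).mp h1.symm i (Finset.mem_univ i)
    have hin2 : ∀ j ∈ (Finset.univ : Finset (Fin N)), (0:ℝ) ≤ (X i j) ^ 2 :=
      fun _ _ => sq_nonneg _
    have h3 := (Finset.sum_eq_zero_iff_of_nonneg hin2).mp h2 j (Finset.mem_univ j)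
    have := pow_eq_zero_iff (n := 2) (by norm_num) |>.mp h3
    simpa using this

lemma key_lemma {N k : ℕ} [NeZero k] (hk : 2 ≤ k) (As Astar B0 : Matrix (Fin N) (Fin N) ℝ)
    (hpos : 0 < frobSq (Astar - B0))
    (hineq : frobSq (As - B0) ≤ frobSq (As - Astar) + frobSq (Astar - B0)) :
    gcLoss As (fun i : Fin k => if i = 0 then B0 else Astar) <
      gcLoss As (fun _ : Fin k => Astar) := by
  set c := hSim As Astar with hc_def
  set g := hSim As B0 with hg_def
  set w := hSim Astar B0 with hw_def
  set m := ((k - 1 : ℕ) : ℝ) with hm_def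
  have hc : 0 < c := hSim_pos _ _
  have hg : 0 < g := hSim_pos _ _
  have hw : 0 < w := hSim_pos _ _
  have hw1 : w < 1 := by
    rw [hw_def, hSim_eq]
    calc Real.exp (-(frobSq (Astar - B0))) < Real.exp 0 :=
          Real.exp_lt_exp.mpr (by linarith)
      _ = 1 := Real.exp_zero
  have hm : (1:ℝ) ≤ m := by
    rw [hm_def]
    have : 1 ≤ k - 1 := by omega
    exact_mod_cast this
  have hcw : c * w ≤ g := by
    rw [hc_def, hw_def, hg_def, hSim_eq, hSim_eq, hSim_eq, ← Real.exp_add]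
    apply Real.exp_le_exp.mpr
    linarith
  have hcard : ∀ i : Fin k, ((Finset.univ.erase i).card : ℝ) = m := by
    intro i
    rw [Finset.card_erase_of_mem (Finset.mem_univ i), Finset.card_univ, Fintype.card_fin]
  -- the homogeneous inner sums
  have hAsum : ∀ i : Fin k,
      (∑ j ∈ Finset.univ.erase i, hSim Astar Astar) = m := by
    intro i
    rw [hSim_self, Finset.sum_const, nsmul_eq_mul, mul_one, hcard]
  -- the perturbed inner sum for i = 0
  have hsum0 : (∑ j ∈ Finset.univ.erase (0 : Fin k),
      hSim B0 (if j = 0 then B0 else Astar)) = m * w := by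
    rw [Finset.sum_congr rfl (fun j hj => by
      rw [if_neg (Finset.ne_of_mem_erase hj), ← hSim_comm])]
    rw [Finset.sum_const, nsmul_eq_mul, hcard]
  -- the perturbed inner sum for i ≠ 0
  have hsumi : ∀ i : Fin k, i ≠ 0 → (∑ j ∈ Finset.univ.erase i,
      hSim Astar (if j = 0 then B0 else Astar)) = (w - 1) + m := by
    intro i hi
    have : ∀ j ∈ Finset.univ.erase i,
        hSim Astar (if j = 0 then B0 else Astar) = (if j = 0 then w - 1 else 0) + 1 := by
      intro j _
      by_cases hj : j = 0
      · subst hj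
        rw [if_pos rfl, if_pos rfl, ← hw_def]
        ring
      · simp [hj, hSim_self]
    rw [Finset.sum_congr rfl this, Finset.sum_add_distrib, Finset.sum_const,
      nsmul_eq_mul, mul_one, hcard, Finset.sum_ite_eq' (Finset.univ.erase i) 0
        (fun _ => w - 1)]
    rw [if_pos (Finset.mem_erase.mpr ⟨Ne.symm hi, Finset.mem_univ _⟩)]
  unfold gcLoss
  have hmw : 0 < m * w := mul_pos (lt_of_lt_of_le one_pos hm) hw
  have hwm : 0 < c + ((w - 1) + m) := by linarith
  refine Finset.sum_lt_sum (fun i _ => ?_) ⟨⟨1, by omega⟩, Finset.mem_univ _, ?_⟩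
  · -- weak inequality for every i
    by_cases hi : i = 0
    · subst hi
      simp only [eq_self_iff_true, if_true]
      rw [hsum0, hAsum]
      apply neg_le_neg
      apply Real.log_le_log (div_pos hc (by linarith : (0:ℝ) < c + m))
      rw [div_le_div_iff₀ (by linarith : (0:ℝ) < c + m) (by linarith : (0:ℝ) < g + m * w)]
      nlinarith [hcw, hm, hw.le, hg.le, hc.le]
    · simp only [if_neg hi]
      rw [hsumi i hi, hAsum]
      apply neg_le_neg
      apply Real.log_le_log (div_pos hc (by linarith : (0:ℝ) < c + m))
      exact le_of_lt (div_lt_div_of_pos_left hc hwm (by linarith))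
  · -- strict inequality at i = 1
    have h10 : (⟨1, by omega⟩ : Fin k) ≠ 0 := by
      simp [Fin.ext_iff]
    simp only [if_neg h10]
    rw [hsumi _ h10, hAsum]
    apply neg_lt_neg
    apply Real.log_lt_log (div_pos hc (by linarith : (0:ℝ) < c + m))
    exact div_lt_div_of_pos_left hc hwm (by linarith)

/-- For any homogeneous dynamic graph configuration `A_1 = … = A_k = A_*`,
there exist dynamic graphs `B_1,…,B_k`, not all equal, with strictly smaller per-sample
graph cohesion loss; hence no homogeneous configuration minimizes the loss. -/
theorem homogeneous_configuration_not_minimizer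
    {N k : ℕ} (hN : 0 < N) (hk : 2 ≤ k)
    (As Astar : Matrix (Fin N) (Fin N) ℝ)
    (A : Fin k → Matrix (Fin N) (Fin N) ℝ) (hA : ∀ i, A i = Astar) :
    ∃ B : Fin k → Matrix (Fin N) (Fin N) ℝ,
      (∃ i j, B i ≠ B j) ∧ gcLoss As B < gcLoss As A := by
  haveI : NeZero k := ⟨by omega⟩
  have hAeq : A = fun _ => Astar := funext hA
  subst hAeq
  by_cases hcase : As = Astar
  · -- homogeneous point equals the static matrix: perturb in an arbitrary direction
    set E : Matrix (Fin N) (Fin N) ℝ := fun _ _ => 1 with hE_def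
    set B0 : Matrix (Fin N) (Fin N) ℝ := Astar + E with hB0_def
    have hne : Astar - B0 ≠ 0 := by
      intro h
      have := congrFun (congrFun h ⟨0, hN⟩) ⟨0, hN⟩
      simp [hB0_def, hE_def, Matrix.sub_apply, Matrix.add_apply] at this
      change Astar ⟨0, hN⟩ ⟨0, hN⟩ - (Astar ⟨0, hN⟩ ⟨0, hN⟩ + 1) = 0 at this
      linarith
    have hpos : 0 < frobSq (Astar - B0) := frobSq_pos hne
    have hineq : frobSq (As - B0) ≤ frobSq (As - Astar) + frobSq (Astar - B0) := by
      rw [hcase]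
      have : frobSq (Astar - Astar) = 0 := by simp [frobSq]
      linarith [frobSq_nonneg (Astar - B0)]
    refine ⟨fun i : Fin k => if i = 0 then B0 else Astar, ⟨0, ⟨1, by omega⟩, ?_⟩, ?_⟩
    · have h10 : ((⟨1, by omega⟩ : Fin k)) ≠ 0 := by simp [Fin.ext_iff]
      simp only [eq_self_iff_true, if_true, if_neg h10]
      intro h
      apply hne
      rw [h]
      simp
    · exact key_lemma hk As Astar B0 hpos hineq
  · -- otherwise move one matrix all the way to the static matrix
    set B0 : Matrix (Fin N) (Fin N) ℝ := As with hB0_def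
    have hne : Astar - B0 ≠ 0 := by
      intro h
      exact hcase (by rw [sub_eq_zero] at h; exact h.symm)
    have hpos : 0 < frobSq (Astar - B0) := frobSq_pos hne
    have hineq : frobSq (As - B0) ≤ frobSq (As - Astar) + frobSq (Astar - B0) := by
      have h0 : frobSq (As - B0) = 0 := by simp [hB0_def, frobSq]
      linarith [frobSq_nonneg (As - Astar), frobSq_nonneg (Astar - B0)]
    refine ⟨fun i : Fin k => if i = 0 then B0 else Astar, ⟨0, ⟨1, by omega⟩, ?_⟩, ?_⟩
    · have h10 : ((⟨1, by omega⟩ : Fin k)) ≠ 0 := by simp [Fin.ext_iff]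
      simp only [eq_self_iff_true, if_true, if_neg h10]
      intro h
      apply hne
      rw [h]
      simp
    · exact key_lemma hk As Astar B0 hpos hineq
end
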